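/- Let G be a group acting linearly on a complex vector space X, generated by a finite set S. Suppose x ∈ X and a finite-dimensional subspace L ⊆ X are such that for every g ∈ S ∪ S⁻¹ there exists a finite-dimensional G-invariant subspace R(g) ⊆ X with g·x ∈ L + R(g). If moreover for every g ∈ G there is a finite-dimensional G-invariant R(g) with g·x ∈ L + R(g), then x belongs to a finite-dimensional G-invariant subspace of X. -/

import Mathlib

theorem stmt15 {G : Type*} [Group G] {X : Type*} [AddCommGroup X] [Module ℂ X]
    [DistribMulAction G X] [SMulCommClass G ℂ X]
    (S : Finset G) (hgen : Subgroup.closure (S : Set G) = ⊤)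
    (x : X) (L : Submodule ℂ X) (hL : FiniteDimensional ℂ L)
    (hS : ∀ g : G, (g ∈ S ∨ g⁻¹ ∈ S) →
      ∃ R : Submodule ℂ X, FiniteDimensional ℂ R ∧
        (∀ a : G, ∀ v ∈ R, a • v ∈ R) ∧ g • x ∈ L ⊔ R)
    (hall : ∀ g : G,
      ∃ R : Submodule ℂ X, FiniteDimensional ℂ R ∧
        (∀ a : G, ∀ v ∈ R, a • v ∈ R) ∧ g • x ∈ L ⊔ R) :
    ∃ V : Submodule ℂ X, FiniteDimensional ℂ V ∧
      (∀ a : G, ∀ v ∈ V, a • v ∈ V) ∧ x ∈ V := by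
  classical
  -- the collection of finite-dimensional invariant subspaces
  set 𝒮 : Set (Submodule ℂ X) :=
    {R | FiniteDimensional ℂ R ∧ ∀ a : G, ∀ v ∈ R, a • v ∈ R} with h𝒮
  have hdir : DirectedOn (· ≤ ·) 𝒮 := by
    rintro R₁ ⟨h1, h1'⟩ R₂ ⟨h2, h2'⟩
    refine ⟨R₁ ⊔ R₂, ⟨?_, ?_⟩, le_sup_left, le_sup_right⟩
    · exact Submodule.finiteDimensional_sup R₁ R₂
    · intro a v hv
      rw [Submodule.mem_sup] at hv ⊢
      obtain ⟨y, hy, z, hz, rfl⟩ := hv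
      exact ⟨a • y, h1' a y hy, a • z, h2' a z hz, (smul_add a y z).symm⟩
  have hne : 𝒮.Nonempty :=
    ⟨⊥, inferInstance, fun a v hv => by
      rw [Submodule.mem_bot] at hv ⊢; rw [hv, smul_zero]⟩
  set I : Submodule ℂ X := sSup 𝒮 with hI
  have hmemI : ∀ v : X, v ∈ I ↔ ∃ R ∈ 𝒮, v ∈ R := fun v =>
    Submodule.mem_sSup_of_directed hne hdir
  set π := I.mkQ with hπ
  have hmapI : ∀ R ∈ 𝒮, R.map π = ⊥ := by
    intro R hR
    rw [eq_bot_iff]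
    rw [Submodule.map_le_iff_le_comap]
    intro v hv
    simp only [Submodule.mem_comap, Submodule.mem_bot, hπ, Submodule.mkQ_apply,
      Submodule.Quotient.mk_eq_zero]
    exact (hmemI v).mpr ⟨R, hR, hv⟩
  -- every orbit vector maps into the image of L
  have horb : ∀ g : G, π (g • x) ∈ L.map π := by
    intro g
    obtain ⟨R, hRfd, hRinv, hmem⟩ := hall g
    have hmem' := Submodule.mem_map_of_mem (f := π) hmem
    rwa [Submodule.map_sup, hmapI R ⟨hRfd, hRinv⟩, sup_bot_eq] at hmem'
  have hLfd : FiniteDimensional ℂ (L.map π) := Module.Finite.map L π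
  set W : Submodule ℂ (X ⧸ I) := Submodule.span ℂ (Set.range fun g : G => π (g • x)) with hW
  have hWle : W ≤ L.map π := Submodule.span_le.mpr (by rintro _ ⟨g, rfl⟩; exact horb g)
  have hWfd : FiniteDimensional ℂ W := Submodule.finiteDimensional_of_le hWle
  have hWfg : W.FG := (Submodule.fg_iff_finiteDimensional W).mpr hWfd
  have hWc := (Submodule.fg_iff_compact W).mp hWfg
  have hWle2 : W ≤ ⨆ g : G, Submodule.span ℂ {π (g • x)} := by
    rw [hW, Submodule.span_range_eq_iSup]
  obtain ⟨F₀, hF₀⟩ := CompleteLattice.IsCompactElement.exists_finset_of_le_iSup _ hWc _ hWle2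
  set F : Finset G := insert 1 F₀ with hF
  set N : Submodule ℂ X := Submodule.span ℂ ((fun g : G => g • x) '' (F : Set G)) with hN
  have hxN : x ∈ N := by
    apply Submodule.subset_span
    exact ⟨1, by simp [hF], one_smul G x⟩
  -- every orbit vector lies in N ⊔ I
  have hkey : ∀ g : G, g • x ∈ N ⊔ I := by
    intro g
    have h1 : π (g • x) ∈ W := Submodule.subset_span ⟨g, rfl⟩
    have h2 : (⨆ a ∈ F₀, Submodule.span ℂ {π (a • x)}) ≤ N.map π := by
      refine iSup_le fun a => iSup_le fun ha => ?_
      rw [Submodule.span_singleton_le_iff_mem]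
      exact Submodule.mem_map_of_mem
        (Submodule.subset_span ⟨a, by simp [hF, ha], rfl⟩)
    have h3 : π (g • x) ∈ N.map π := h2 (hF₀ h1)
    have h4 : g • x ∈ Submodule.comap I.mkQ (Submodule.map I.mkQ N) := h3
    rwa [Submodule.comap_map_mkQ, sup_comm] at h4
  have hkey2 : ∀ g : G, ∃ R ∈ 𝒮, g • x ∈ N ⊔ R := by
    intro g
    obtain ⟨n, hn, i, hi, hni⟩ := Submodule.mem_sup.mp (hkey g)
    obtain ⟨R, hR, hiR⟩ := (hmemI i).mp hi
    exact ⟨R, hR, Submodule.mem_sup.mpr ⟨n, hn, i, hiR, hni⟩⟩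
  choose Rm hRm𝒮 hRmmem using hkey2
  haveI : ∀ p : G × G, FiniteDimensional ℂ (Rm (p.1 * p.2)) := fun p => (hRm𝒮 _).1
  set Rstar : Submodule ℂ X := (S ×ˢ F).sup (fun p => Rm (p.1 * p.2)) with hRstar
  haveI hRstarfd : FiniteDimensional ℂ Rstar := Submodule.finiteDimensional_finset_sup _ _
  have hRstarinv : ∀ a : G, ∀ v ∈ Rstar, a • v ∈ Rstar := by
    intro a v hv
    have : Rstar ≤ Submodule.comap (DistribMulAction.toLinearMap ℂ X a) Rstar := by
      rw [hRstar]
      refine Finset.sup_le fun p hp => ?_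
      intro w hw
      simp only [Submodule.mem_comap, DistribSMul.toLinearMap_apply]
      exact Finset.le_sup (f := fun p : G × G => Rm (p.1 * p.2)) hp
        ((hRm𝒮 (p.1 * p.2)).2 a w hw)
    exact this hv
  set M : Submodule ℂ X := N ⊔ Rstar with hM
  haveI hNfd : FiniteDimensional ℂ N :=
    FiniteDimensional.span_of_finite ℂ ((F : Set G).toFinite.image _)
  haveI hMfd : FiniteDimensional ℂ M := Submodule.finiteDimensional_sup N Rstar
  -- M is invariant under the generators
  have hMgen : ∀ s ∈ S, ∀ v ∈ M, s • v ∈ M := by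
    intro s hs v hv
    have hle : M ≤ Submodule.comap (DistribMulAction.toLinearMap ℂ X s) M := by
      rw [hM]
      refine sup_le ?_ ?_
      · rw [hN, Submodule.span_le]
        rintro _ ⟨h, hh, rfl⟩
        simp only [Set.mem_setOf_eq, SetLike.mem_coe, Submodule.mem_comap,
          DistribSMul.toLinearMap_apply]
        have hsh : (s * h) • x ∈ N ⊔ Rm (s * h) := hRmmem (s * h)
        have hRle : Rm (s * h) ≤ Rstar := by
          rw [hRstar]
          exact Finset.le_sup (f := fun p : G × G => Rm (p.1 * p.2)) (b := (s, h))
            (Finset.mem_product.mpr ⟨hs, Finset.mem_coe.mp hh⟩)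
        have : (s * h) • x ∈ M := sup_le_sup_left hRle N hsh
        rwa [mul_smul] at this
      · intro w hw
        simp only [Submodule.mem_comap, DistribSMul.toLinearMap_apply]
        exact le_sup_right (a := N) (hRstarinv s w hw)
    exact hle hv
  -- the set of elements preserving M is a subgroup
  set H : Subgroup G :=
    { carrier := {a : G | ∀ v ∈ M, a • v ∈ M}
      one_mem' := fun v hv => by rwa [one_smul]
      mul_mem' := by
        intro a b ha hb v hv
        rw [mul_smul]
        exact ha _ (hb v hv)
      inv_mem' := by
        intro a ha v hv
        -- a acts injectively on the finite-dimensional M, hence surjectively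
        set f : M →ₗ[ℂ] M :=
          (DistribMulAction.toLinearMap ℂ X a).restrict (p := M) (q := M) (fun w hw => ha w hw)
            with hf
        have hinj : Function.Injective f := by
          intro w₁ w₂ hw
          apply Subtype.ext
          have := congrArg (Subtype.val) hw
          simp only [hf, LinearMap.restrict_apply, DistribSMul.toLinearMap_apply] at this
          exact MulAction.injective a this
        obtain ⟨⟨w, hw⟩, hwe⟩ := LinearMap.surjective_of_injective hinj ⟨v, hv⟩
        have hweq : a • w = v := by
          have := congrArg (Subtype.val) hwe
          exact this
        rw [← hweq, inv_smul_smul]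
        exact hw } with hH
  have hSH : (S : Set G) ⊆ H := fun s hs => hMgen s hs
  have hHtop : ∀ a : G, a ∈ H := by
    intro a
    have := (Subgroup.closure_le H).mpr hSH
    rw [hgen] at this
    exact this trivial
  exact ⟨M, hMfd, fun a v hv => hHtop a v hv, le_sup_left (b := Rstar) hxN⟩
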